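/- If f : ℝ≥0 → ℂ is Lipschitz with constant L and f(0) = 0, then for all x, y ≥ 0 and all unimodular complex c, |f(x) - c·f(y)| ≤ √2 · L · |x - c·y|. -/

import Mathlib

theorem stmt_6 (f : ℝ → ℂ) (L : ℝ) (h0 : f 0 = 0)
    (hf : ∀ x y : ℝ, 0 ≤ x → 0 ≤ y → ‖f x - f y‖ ≤ L * |x - y|) :
    ∀ x y : ℝ, 0 ≤ x → 0 ≤ y → ∀ c : ℂ, ‖c‖ = 1 →
      ‖f x - c * f y‖ ≤ Real.sqrt 2 * L * ‖(x : ℂ) - c * (y : ℂ)‖ := by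
  intro x y hx hy c hc
  have hL : 0 ≤ L := by
    have h1 := hf 1 0 zero_le_one le_rfl
    rw [h0, sub_zero, sub_zero, abs_one, mul_one] at h1
    exact le_trans (norm_nonneg _) h1
  set t := ‖(1 : ℂ) - c‖ with htdef
  have ht0 : 0 ≤ t := norm_nonneg _
  have hfy : ‖f y‖ ≤ L * y := by
    have := hf y 0 hy le_rfl
    simpa [h0, abs_of_nonneg hy] using this
  have hfx : ‖f x‖ ≤ L * x := by
    have := hf x 0 hx le_rfl
    simpa [h0, abs_of_nonneg hx] using this
  have key1 : ‖f x - c * f y‖ ≤ L * |x - y| + L * y * t := by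
    have he : f x - c * f y = (f x - f y) + (1 - c) * f y := by ring
    rw [he]
    calc ‖(f x - f y) + (1 - c) * f y‖ ≤ ‖f x - f y‖ + ‖(1 - c) * f y‖ := norm_add_le _ _
      _ ≤ L * |x - y| + t * (L * y) := by
          rw [norm_mul]
          exact add_le_add (hf x y hx hy) (mul_le_mul_of_nonneg_left hfy ht0)
      _ = L * |x - y| + L * y * t := by ring
  have key2 : ‖f x - c * f y‖ ≤ L * |x - y| + L * x * t := by
    have he : f x - c * f y = c * (f x - f y) + (1 - c) * f x := by ring
    rw [he]
    calc ‖c * (f x - f y) + (1 - c) * f x‖ ≤ ‖c * (f x - f y)‖ + ‖(1 - c) * f x‖ :=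
          norm_add_le _ _
      _ ≤ L * |x - y| + t * (L * x) := by
          rw [norm_mul, norm_mul, hc, one_mul]
          exact add_le_add (hf x y hx hy) (mul_le_mul_of_nonneg_left hfx ht0)
      _ = L * |x - y| + L * x * t := by ring
  set m := min x y with hm
  have keym : ‖f x - c * f y‖ ≤ L * (|x - y| + m * t) := by
    rcases min_le_iff.mpr (Or.inl (le_refl x)) with _
    rcases le_total x y with h | h
    · have : m = x := min_eq_left h
      rw [this]; linarith [key2]
    · have : m = y := min_eq_right h
      rw [this]; linarith [key1]
  have hc2 : c.re ^ 2 + c.im ^ 2 = 1 := by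
    have := Complex.sq_norm c
    rw [Complex.normSq_apply] at this
    nlinarith [this]
  have ht2 : t ^ 2 = 2 - 2 * c.re := by
    rw [htdef, Complex.sq_norm, Complex.normSq_apply]
    simp
    nlinarith [hc2]
  have hnorm : ‖(x : ℂ) - c * (y : ℂ)‖ ^ 2 = (x - y) ^ 2 + x * y * t ^ 2 := by
    rw [Complex.sq_norm, Complex.normSq_apply, ht2]
    simp [Complex.sub_re, Complex.sub_im, Complex.mul_re, Complex.mul_im]
    linear_combination (y * y) * hc2
  have hm2 : m ^ 2 ≤ x * y := by
    rcases le_total x y with h | h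
    · have : m = x := min_eq_left h
      rw [this]; nlinarith
    · have : m = y := min_eq_right h
      rw [this]; nlinarith
  have hsum : |x - y| + m * t ≤ Real.sqrt 2 * ‖(x : ℂ) - c * (y : ℂ)‖ := by
    have hnn : 0 ≤ |x - y| + m * t :=
      add_nonneg (abs_nonneg _) (mul_nonneg (le_min hx hy) ht0)
    have hsq : (|x - y| + m * t) ^ 2 ≤ (Real.sqrt 2 * ‖(x : ℂ) - c * (y : ℂ)‖) ^ 2 := by
      rw [mul_pow, Real.sq_sqrt (by norm_num : (0:ℝ) ≤ 2), hnorm]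
      have h2 : (m * t) ^ 2 ≤ x * y * t ^ 2 := by
        have := mul_le_mul_of_nonneg_right hm2 (sq_nonneg t)
        nlinarith
      nlinarith [sq_nonneg (|x - y| - m * t), sq_abs (x - y)]
    calc |x - y| + m * t = Real.sqrt ((|x - y| + m * t) ^ 2) := (Real.sqrt_sq hnn).symm
      _ ≤ Real.sqrt ((Real.sqrt 2 * ‖(x : ℂ) - c * (y : ℂ)‖) ^ 2) := Real.sqrt_le_sqrt hsq
      _ = Real.sqrt 2 * ‖(x : ℂ) - c * (y : ℂ)‖ := Real.sqrt_sq (by positivity)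
  calc ‖f x - c * f y‖ ≤ L * (|x - y| + m * t) := keym
    _ ≤ L * (Real.sqrt 2 * ‖(x : ℂ) - c * (y : ℂ)‖) := mul_le_mul_of_nonneg_left hsum hL
    _ = Real.sqrt 2 * L * ‖(x : ℂ) - c * (y : ℂ)‖ := by ring
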